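/- arXiv:1012.3349 — 10 statements merged into one kernel-verified Lean document; each statement's English description precedes it below -/
import Mathlib

section
/- Let G be a group, (X,d_X) a nonempty metric space, Ψ a strong homotopy action of G on X, S ⊆ G a finite symmetric subset containing the identity e, k ∈ ℕ, and Λ > 0. Then the quasi-metric d_{Ψ,S,k,Λ} on G × X takes only finite values (i.e. is a metric) if and only if S generates G. -/
open unitInterval ENNReal

/-- A strong homotopy action of a group `G` on a topological space `X`.
The argument `(g_j, t_j, g_{j-1}, …, g_1, t_1, g_0, x)` is encoded as the list
`[(g_j,t_j),…,(g_1,t_1)]`, the final group element `g_0` and the point `x`.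
Continuity (with `G` discrete) is encoded summand-wise: for every length `n` and
every fixed tuple of group elements, the map is jointly continuous in the
parameters `t_i ∈ [0,1]` and in `x`. -/
structure StrongHomotopyAction (G X : Type*) [Group G] [TopologicalSpace X] where
  toFun : List (G × unitInterval) → G → X → X
  continuous' : ∀ (n : ℕ) (gs : Fin n → G) (g₀ : G),
    Continuous fun p : (Fin n → unitInterval) × X =>
      toFun (List.ofFn fun i => (gs i, p.1 i)) g₀ p.2
  act_zero : ∀ (L₁ L₂ : List (G × unitInterval)) (g g₀ : G) (x : X),
    toFun (L₁ ++ (g, (0 : unitInterval)) :: L₂) g₀ x = toFun L₁ g (toFun L₂ g₀ x)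
  act_one_mid : ∀ (L₁ L₂ : List (G × unitInterval)) (g g' : G) (t : unitInterval)
      (g₀ : G) (x : X),
    toFun (L₁ ++ (g, (1 : unitInterval)) :: (g', t) :: L₂) g₀ x
      = toFun (L₁ ++ (g * g', t) :: L₂) g₀ x
  act_one_last : ∀ (L : List (G × unitInterval)) (g g₀ : G) (x : X),
    toFun (L ++ [(g, (1 : unitInterval))]) g₀ x = toFun L (g * g₀) x
  id_head : ∀ (t : unitInterval) (L : List (G × unitInterval)) (g₀ : G) (x : X),
    toFun (((1 : G), t) :: L) g₀ x = toFun L g₀ x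
  id_mid : ∀ (L₁ L₂ : List (G × unitInterval)) (g : G) (t t' : unitInterval)
      (g₀ : G) (x : X),
    toFun (L₁ ++ (g, t) :: ((1 : G), t') :: L₂) g₀ x = toFun (L₁ ++ (g, t * t') :: L₂) g₀ x
  id_last : ∀ (L : List (G × unitInterval)) (g : G) (t : unitInterval) (x : X),
    toFun (L ++ [(g, t)]) (1 : G) x = toFun L g x
  id_base : ∀ x : X, toFun [] (1 : G) x = x

variable {G X : Type*} [Group G] [MetricSpace X]

/-- `F_g(Ψ,S,k)`: the set of maps `x ↦ Ψ(g_k, t_k, …, g_0, x)` with `g_i ∈ S`,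
`t_i ∈ [0,1]` and `g_k ⋯ g_0 = g`. -/
def FMaps (Ψ : StrongHomotopyAction G X) (S : Set G) (k : ℕ) (g : G) : Set (X → X) :=
  { f | ∃ (L : List (G × unitInterval)) (g₀ : G), L.length = k ∧
      (∀ q ∈ L, q.1 ∈ S) ∧ g₀ ∈ S ∧ (L.map Prod.fst).prod * g₀ = g ∧
      f = fun x => Ψ.toFun L g₀ x }

/-- `S¹_{Ψ,S,k}(g,x)`. -/
def sOne (Ψ : StrongHomotopyAction G X) (S : Set G) (k : ℕ) (z : G × X) : Set (G × X) :=
  { w | ∃ a ∈ S, ∃ b ∈ S, ∃ f ∈ FMaps Ψ S k a, ∃ f' ∈ FMaps Ψ S k b,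
      f z.2 = f' w.2 ∧ w.1 = z.1 * a⁻¹ * b }

/-- `Sⁿ_{Ψ,S,k}(g,x)`, defined inductively; `sIter Ψ S k 1 = sOne Ψ S k`. -/
def sIter (Ψ : StrongHomotopyAction G X) (S : Set G) (k : ℕ) : ℕ → G × X → Set (G × X)
  | 0 => fun z => {z}
  | n + 1 => fun z => ⋃ w ∈ sIter Ψ S k n z, sOne Ψ S k w

open Classical in
/-- The cost of a single step in a chain: the minimum of `Λ·d_X(x,x')`
(allowed when the group components agree) and `1` (allowed when the target lies in
`S¹_{Ψ,S,k}` of the source); `∞` if neither is allowed. -/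
noncomputable def qcost (Ψ : StrongHomotopyAction G X) (S : Set G) (k : ℕ) (Λ : ℝ)
    (z w : G × X) : ℝ≥0∞ :=
  min (if z.1 = w.1 then ENNReal.ofReal (Λ * dist z.2 w.2) else ⊤)
      (if w ∈ sOne Ψ S k z then 1 else ⊤)

/-- The quasi-metric `d_{Ψ,S,k,Λ}` on `G × X`: the infimum over all finite chains
of the sum of the step costs. -/
noncomputable def qdist (Ψ : StrongHomotopyAction G X) (S : Set G) (k : ℕ) (Λ : ℝ)
    (z w : G × X) : ℝ≥0∞ :=
  ⨅ (m : ℕ) (c : Fin (m + 1) → G × X) (_ : c 0 = z) (_ : c (Fin.last m) = w),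
    ∑ i : Fin m, qcost Ψ S k Λ (c i.castSucc) (c i.succ)

/-! A chain has finite cost exactly when each of its steps does, and a step has finite cost
exactly when it stays in a fibre `{g} × X` or is an `S¹`-move, which multiplies the group
coordinate on the right by some `a⁻¹ b` with `a, b ∈ S`. So finite distance from `(g, x)` to
`(h, y)` forces `g⁻¹ h ∈ ⟨S⟩`. Conversely, `S¹` is symmetric, so being at finite distance is an
equivalence relation; fibres are connected by metric steps, and for `s ∈ S` the maps
`Ψ((e,1), …, (e,1), s, ·) = Ψ(s, ·)` in `F_s` and `id` in `F_e` give an `S¹`-move from `(g s, x)`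
to `(g, Ψ(s, x))`. -/

open Relation

section Chains

variable {α : Type*}

theorem reflTransGen_of_fin_chain {R : α → α → Prop} :
    ∀ {m : ℕ} (p : Fin (m + 1) → α), (∀ i : Fin m, R (p i.castSucc) (p i.succ)) →
      ReflTransGen R (p 0) (p (Fin.last m))
  | 0, _, _ => .refl
  | m + 1, p, hp =>
    (reflTransGen_of_fin_chain (fun i => p i.castSucc) fun i => by
      simpa only [Fin.succ_castSucc] using hp i.castSucc).tail
      (by simpa only [Fin.succ_last] using hp (Fin.last m))

theorem exists_fin_chain_of_reflTransGen {R : α → α → Prop} {a b : α}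
    (h : ReflTransGen R a b) :
    ∃ (m : ℕ) (p : Fin (m + 1) → α), p 0 = a ∧ p (Fin.last m) = b ∧
      ∀ i : Fin m, R (p i.castSucc) (p i.succ) := by
  induction h using ReflTransGen.head_induction_on with
  | refl => exact ⟨0, fun _ => b, rfl, rfl, Fin.elim0⟩
  | head hac _ ih =>
    obtain ⟨m, p, hp0, hpm, hp⟩ := ih
    refine ⟨m + 1, Fin.cons _ p, rfl, by simpa [← Fin.succ_last] using hpm, ?_⟩
    refine Fin.cases (by simpa [hp0] using hac) fun i => ?_
    simpa [← Fin.succ_castSucc] using hp i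

theorem iInf_fin_chain_sum_ne_top_iff (c : α → α → ℝ≥0∞) {a b : α} :
    (⨅ (m : ℕ) (p : Fin (m + 1) → α) (_ : p 0 = a) (_ : p (Fin.last m) = b),
        ∑ i : Fin m, c (p i.castSucc) (p i.succ)) ≠ ⊤ ↔
      ReflTransGen (fun x y => c x y ≠ ⊤) a b := by
  simp only [ne_eq, iInf_eq_top, not_forall, ENNReal.sum_eq_top, Finset.mem_univ, true_and,
    not_exists, exists_prop]
  constructor
  · rintro ⟨m, p, rfl, rfl, hp⟩
    exact reflTransGen_of_fin_chain p hp
  · exact exists_fin_chain_of_reflTransGen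

end Chains

section Reachability

variable {Ψ : StrongHomotopyAction G X} {S : Set G} {k : ℕ}

def qAdj (Ψ : StrongHomotopyAction G X) (S : Set G) (k : ℕ) (z w : G × X) : Prop :=
  z.1 = w.1 ∨ w ∈ sOne Ψ S k z

theorem qcost_ne_top_iff {Λ : ℝ} {z w : G × X} :
    qcost Ψ S k Λ z w ≠ ⊤ ↔ qAdj Ψ S k z w := by
  unfold qcost qAdj
  split_ifs <;> simp_all

theorem qdist_ne_top_iff {Λ : ℝ} {z w : G × X} :
    qdist Ψ S k Λ z w ≠ ⊤ ↔ ReflTransGen (qAdj Ψ S k) z w := by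
  simp only [qdist, iInf_fin_chain_sum_ne_top_iff, qcost_ne_top_iff]

theorem mem_sOne_comm {z w : G × X} : w ∈ sOne Ψ S k z → z ∈ sOne Ψ S k w := by
  rintro ⟨a, ha, b, hb, f, hf, f', hf', hff', hw⟩
  exact ⟨b, hb, a, ha, f', hf', f, hf, hff'.symm, by rw [hw]; group⟩

instance : Std.Symm (qAdj Ψ S k) := ⟨fun _ _ => Or.imp Eq.symm mem_sOne_comm⟩

theorem inv_mul_mem_closure_of_mem_sOne {z w : G × X} (h : w ∈ sOne Ψ S k z) :
    z.1⁻¹ * w.1 ∈ Subgroup.closure S := by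
  obtain ⟨a, ha, b, hb, -, -, -, -, -, hw⟩ := h
  rw [hw, mul_assoc, inv_mul_cancel_left]
  exact mul_mem (inv_mem (Subgroup.subset_closure ha)) (Subgroup.subset_closure hb)

theorem inv_mul_mem_closure_of_reflTransGen {z w : G × X}
    (h : ReflTransGen (qAdj Ψ S k) z w) : z.1⁻¹ * w.1 ∈ Subgroup.closure S := by
  induction h with
  | refl => simp
  | tail _ hstep ih =>
    rcases hstep with heq | hmem
    · rwa [← heq]
    · simpa [mul_assoc] using mul_mem ih (inv_mul_mem_closure_of_mem_sOne hmem)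

theorem StrongHomotopyAction.toFun_replicate_one (t : unitInterval) (n : ℕ) (g₀ : G) :
    Ψ.toFun (List.replicate n ((1 : G), t)) g₀ = Ψ.toFun [] g₀ := by
  induction n with
  | zero => rfl
  | succ n ih => funext x; rw [List.replicate_succ, Ψ.id_head, ih]

theorem toFun_nil_mem_FMaps (hSone : (1 : G) ∈ S) {s : G} (hs : s ∈ S) :
    Ψ.toFun [] s ∈ FMaps Ψ S k s := by
  refine ⟨List.replicate k ((1 : G), 1), s, List.length_replicate, ?_, hs, by simp,
    (Ψ.toFun_replicate_one 1 k s).symm⟩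
  rintro q hq
  rw [List.eq_of_mem_replicate hq]
  exact hSone

theorem mk_toFun_nil_mem_sOne (hSone : (1 : G) ∈ S) {s : G} (hs : s ∈ S) (g : G) (x : X) :
    (g, Ψ.toFun [] s x) ∈ sOne Ψ S k (g * s, x) :=
  ⟨s, hs, 1, hSone, _, toFun_nil_mem_FMaps hSone hs, _, toFun_nil_mem_FMaps hSone hSone,
    (Ψ.id_base _).symm, by group⟩

theorem reflTransGen_mul_of_mem_closure (hSone : (1 : G) ∈ S) {g : G}
    (hg : g ∈ Subgroup.closure S) (h : G) (x y : X) :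
    ReflTransGen (qAdj Ψ S k) (h, x) (h * g, y) := by
  have fibre : ∀ (h : G) (x y : X), ReflTransGen (qAdj Ψ S k) (h, x) (h, y) :=
    fun _ _ _ => .single (Or.inl rfl)
  induction hg using Subgroup.closure_induction generalizing h x y with
  | mem s hs =>
    have hmove : qAdj Ψ S k (h * s, y) (h, Ψ.toFun [] s y) :=
      Or.inr (mk_toFun_nil_mem_sOne hSone hs h y)
    exact (fibre h x _).trans (Std.Symm.symm _ _ (.single hmove))
  | one => simpa using fibre h x y
  | mul a b _ _ iha ihb => simpa [mul_assoc] using (iha h x x).trans (ihb (h * a) x y)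
  | inv a _ iha =>
    exact Std.Symm.symm _ _ (by simpa using iha (h * a⁻¹) y x)

end Reachability

theorem qdist_finite_iff_generates_general {G X : Type*} [Group G] [MetricSpace X] [Nonempty X]
    (Ψ : StrongHomotopyAction G X) (S : Set G) (hSone : (1 : G) ∈ S) (k : ℕ) (Λ : ℝ) :
    (∀ z w : G × X, qdist Ψ S k Λ z w ≠ ⊤) ↔ Subgroup.closure S = ⊤ := by
  simp only [qdist_ne_top_iff]
  constructor
  · intro hfin
    refine eq_top_iff.2 fun g _ => ?_
    obtain ⟨x⟩ := ‹Nonempty X›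
    simpa using inv_mul_mem_closure_of_reflTransGen (hfin (1, x) (g, x))
  · intro hS z w
    have := reflTransGen_mul_of_mem_closure (Ψ := Ψ) (k := k) hSone
      (hS ▸ Subgroup.mem_top (z.1⁻¹ * w.1)) z.1 z.2 w.2
    rwa [mul_inv_cancel_left] at this

/-- The quasi-metric `d_{Ψ,S,k,Λ}` takes only finite values (i.e. is a metric)
if and only if `S` generates `G`. -/
theorem qdist_finite_iff_generates {G X : Type*} [Group G] [MetricSpace X] [Nonempty X]
    (Ψ : StrongHomotopyAction G X) (S : Set G) (hSfin : S.Finite)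
    (hSsymm : ∀ s ∈ S, s⁻¹ ∈ S) (hSone : (1 : G) ∈ S) (k : ℕ) (Λ : ℝ) (hΛ : 0 < Λ) :
    (∀ z w : G × X, qdist Ψ S k Λ z w ≠ ⊤) ↔ Subgroup.closure S = ⊤ :=
  qdist_finite_iff_generates_general Ψ S hSone k Λ
end

section
/- Let G be a group, (X,d_X) a metric space, Ψ a strong homotopy action of G on X, S ⊆ G a finite symmetric subset containing e, k ∈ ℕ and Λ > 0. Then the topology on G × X induced by the quasi-metric d_{Ψ,S,k,Λ} (where a set is open iff it contains an open d_{Ψ,S,k,Λ}-ball around each of its points) coincides with the product of the discrete topology on G and the metric topology on X. -/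
open unitInterval ENNReal

variable {G X : Type*} [Group G] [MetricSpace X]

private lemma qcost_lt_one {Ψ : StrongHomotopyAction G X} {S : Set G} {k : ℕ} {Λ : ℝ}
    {z w : G × X} (h : qcost Ψ S k Λ z w < 1) :
    z.1 = w.1 ∧ ENNReal.ofReal (Λ * dist z.2 w.2) ≤ qcost Ψ S k Λ z w := by
  classical
  unfold qcost at h ⊢
  split_ifs at h ⊢ with h1 h2
  · have hA : ENNReal.ofReal (Λ * dist z.2 w.2) < 1 := by
      rcases min_lt_iff.mp h with h' | h'
      · exact h'
      · exact absurd h' (lt_irrefl _)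
    exact ⟨h1, le_min le_rfl hA.le⟩
  · exact ⟨h1, le_min le_rfl le_top⟩
  · simp at h
  · simp at h

private lemma qcost_le_ofReal {Ψ : StrongHomotopyAction G X} {S : Set G} {k : ℕ} {Λ : ℝ}
    {z w : G × X} (h : z.1 = w.1) :
    qcost Ψ S k Λ z w ≤ ENNReal.ofReal (Λ * dist z.2 w.2) := by
  classical
  unfold qcost
  exact (min_le_left _ _).trans_eq (if_pos h)

private lemma chain_bound {Ψ : StrongHomotopyAction G X} {S : Set G} {k : ℕ} {Λ : ℝ}
    (hΛ : 0 ≤ Λ) :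
    ∀ (m : ℕ) (c : Fin (m + 1) → G × X),
      (∑ i : Fin m, qcost Ψ S k Λ (c i.castSucc) (c i.succ)) < 1 →
      (c (Fin.last m)).1 = (c 0).1 ∧
        ENNReal.ofReal (Λ * dist (c 0).2 (c (Fin.last m)).2) ≤
          ∑ i : Fin m, qcost Ψ S k Λ (c i.castSucc) (c i.succ) := by
  intro m
  induction m with
  | zero =>
    intro c _
    refine ⟨rfl, ?_⟩
    simp [Fin.last]
  | succ m ih =>
    intro c hc
    set c' : Fin (m + 1) → G × X := fun i => c i.castSucc with hc'
    have hsum : ∑ i : Fin (m + 1), qcost Ψ S k Λ (c i.castSucc) (c i.succ)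
        = (∑ i : Fin m, qcost Ψ S k Λ (c' i.castSucc) (c' i.succ))
          + qcost Ψ S k Λ (c' (Fin.last m)) (c (Fin.last (m + 1))) := by
      rw [Fin.sum_univ_castSucc]
      simp only [hc', Fin.succ_castSucc, Fin.succ_last]
    rw [hsum] at hc ⊢
    have h1 : (∑ i : Fin m, qcost Ψ S k Λ (c' i.castSucc) (c' i.succ)) < 1 :=
      (le_add_right le_rfl).trans_lt hc
    have h2 : qcost Ψ S k Λ (c' (Fin.last m)) (c (Fin.last (m + 1))) < 1 :=
      (le_add_left le_rfl).trans_lt hc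
    obtain ⟨hg, hd⟩ := ih c' h1
    obtain ⟨hg2, hd2⟩ := qcost_lt_one h2
    have hc0 : c' 0 = c 0 := by simp [hc']
    refine ⟨hg2.symm.trans (hg.trans (by rw [hc0])), ?_⟩
    calc ENNReal.ofReal (Λ * dist (c 0).2 (c (Fin.last (m + 1))).2)
        ≤ ENNReal.ofReal (Λ * dist (c 0).2 (c' (Fin.last m)).2)
            + ENNReal.ofReal (Λ * dist (c' (Fin.last m)).2 (c (Fin.last (m + 1))).2) := by
          rw [← ENNReal.ofReal_add (by positivity) (by positivity)]
          apply ENNReal.ofReal_le_ofReal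
          rw [← mul_add]
          exact mul_le_mul_of_nonneg_left (dist_triangle _ _ _) hΛ
      _ ≤ (∑ i : Fin m, qcost Ψ S k Λ (c' i.castSucc) (c' i.succ))
            + qcost Ψ S k Λ (c' (Fin.last m)) (c (Fin.last (m + 1))) := by
          refine add_le_add ?_ hd2
          rw [← hc0]; exact hd

private lemma qdist_le_qcost (Ψ : StrongHomotopyAction G X) (S : Set G) (k : ℕ) (Λ : ℝ)
    (z w : G × X) : qdist Ψ S k Λ z w ≤ qcost Ψ S k Λ z w := by
  refine iInf_le_of_le 1 (iInf_le_of_le ![z, w] (iInf_le_of_le rfl (iInf_le_of_le rfl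
    (le_of_eq ?_))))
  simp [Fin.sum_univ_one]

/-- The topology on `G × X` induced by the quasi-metric `d_{Ψ,S,k,Λ}` (a set is open
iff it contains an open ball around each of its points) coincides with the product of
the discrete topology on `G` and the metric topology on `X`. -/
theorem qdist_topology_eq_prod {G X : Type*} [Group G] [MetricSpace X]
    (Ψ : StrongHomotopyAction G X) (S : Set G) (hSfin : S.Finite)
    (hSsymm : ∀ s ∈ S, s⁻¹ ∈ S) (hSone : (1 : G) ∈ S) (k : ℕ) (Λ : ℝ) (hΛ : 0 < Λ) :
    ∀ U : Set (G × X),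
      (@IsOpen (G × X) (@instTopologicalSpaceProd G X ⊥ inferInstance) U) ↔
        ∀ z ∈ U, ∃ ε : ℝ≥0∞, 0 < ε ∧ ∀ w : G × X, qdist Ψ S k Λ z w < ε → w ∈ U := by
  letI : TopologicalSpace G := (⊥ : TopologicalSpace G)
  haveI : DiscreteTopology G := ⟨rfl⟩
  intro U
  constructor
  · intro hU z hz
    obtain ⟨g, x⟩ := z
    obtain ⟨u, hu, v, hv, huv⟩ := mem_nhds_prod_iff.mp (hU.mem_nhds hz)
    obtain ⟨δ, hδ, hball⟩ := Metric.mem_nhds_iff.mp hv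
    refine ⟨min 1 (ENNReal.ofReal (Λ * δ)), lt_min zero_lt_one
      (ENNReal.ofReal_pos.mpr (by positivity)), ?_⟩
    intro w hw
    simp only [qdist, iInf_lt_iff] at hw
    obtain ⟨m, c, h0, hlast, hsum⟩ := hw
    have hlt1 : (∑ i : Fin m, qcost Ψ S k Λ (c i.castSucc) (c i.succ)) < 1 :=
      hsum.trans_le (min_le_left _ _)
    obtain ⟨hg, hd⟩ := chain_bound hΛ.le m c hlt1
    rw [h0, hlast] at hg hd
    have h2 : ENNReal.ofReal (Λ * dist x w.2) < ENNReal.ofReal (Λ * δ) :=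
      hd.trans_lt (hsum.trans_le (min_le_right _ _))
    have hdist : dist x w.2 < δ :=
      lt_of_mul_lt_mul_left ((ENNReal.ofReal_lt_ofReal_iff (by positivity)).mp h2) hΛ.le
    have hw2 : w.2 ∈ v := hball (Metric.mem_ball.mpr (by rwa [dist_comm]))
    have hw1 : w.1 ∈ u := by
      rw [hg]; exact mem_of_mem_nhds hu
    exact huv (Set.mk_mem_prod hw1 hw2)
  · intro h
    rw [isOpen_prod_iff]
    intro g x hgx
    obtain ⟨ε, hε, hball⟩ := h (g, x) hgx
    set r : ℝ≥0∞ := min ε 1 / 2 with hr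
    have hmin0 : min ε 1 ≠ 0 := (lt_min hε zero_lt_one).ne'
    have hmintop : min ε 1 ≠ ⊤ := ((min_le_right ε 1).trans_lt ENNReal.one_lt_top).ne
    have hr0 : 0 < r := ENNReal.half_pos hmin0
    have hrlt : r < min ε 1 := ENNReal.half_lt_self hmin0 hmintop
    have hrtop : r ≠ ⊤ := (hrlt.trans_le (min_le_right _ _)).trans ENNReal.one_lt_top |>.ne
    set δ : ℝ := r.toReal / Λ with hδdef
    have hδ0 : 0 < δ := div_pos (ENNReal.toReal_pos hr0.ne' hrtop) hΛ
    refine ⟨{g}, Metric.ball x δ, isOpen_discrete _, Metric.isOpen_ball,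
      Set.mem_singleton g, Metric.mem_ball_self hδ0, ?_⟩
    rintro ⟨g', y⟩ ⟨hg', hy⟩
    have hg'' : g = g' := (Set.mem_singleton_iff.mp hg').symm
    apply hball
    refine (qdist_le_qcost Ψ S k Λ (g, x) (g', y)).trans_lt ?_
    refine (qcost_le_ofReal hg'').trans_lt ?_
    have hyd : dist x y < δ := by
      have := Metric.mem_ball.mp hy
      rwa [dist_comm] at this
    have hΛd : Λ * dist x y < r.toReal := by
      have h1 : Λ * dist x y < Λ * δ := by
        exact mul_lt_mul_of_pos_left hyd hΛ
      rwa [hδdef, mul_div_cancel₀ _ hΛ.ne'] at h1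
    calc ENNReal.ofReal (Λ * dist x y) < ENNReal.ofReal r.toReal :=
          (ENNReal.ofReal_lt_ofReal_iff (ENNReal.toReal_pos hr0.ne' hrtop)).mpr hΛd
      _ = r := ENNReal.ofReal_toReal hrtop
      _ < ε := hrlt.trans_le (min_le_left _ _)
end

section
/- Let G be a group (regarded as a discrete space) acting continuously by homeomorphisms on a topological space Y, let X ⊆ Y carry the subspace topology, and let H : Y × [0,1] → Y be a continuous map, written H_t := H(·,t), with H_0(Y) = X, H_0 restricted to X the identity of X, H_1 = id_Y, and H_t ∘ H_{t'} = H_{t·t'} for all t, t' ∈ [0,1]. Define Ω : ∐_{j≥0}((G × [0,1])^j × G × X) → Y inductively by Ω(g_0, x) := g_0·x and Ω(g_j, t_j, g_{j-1}, …) := g_j·H_{t_j}(Ω(g_{j-1}, …)) for j ≥ 1. Then Ψ := H_0 ∘ Ω is a strong homotopy action of G on X: it is continuous and satisfies axioms (1)–(6). -/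
open unitInterval ENNReal

/-- Given a `G`-space `Y` and a map `H : Y × [0,1] → Y`, the map
`Ω : ∐_j ((G × [0,1])^j × G × X) → Y` defined inductively by `Ω(g₀, x) := g₀ • x` and
`Ω(g_j, t_j, g_{j-1}, …) := g_j • H_{t_j}(Ω(g_{j-1}, …))`. -/
def OmegaDR {G Y : Type*} [Group G] [MulAction G Y] (H : Y → unitInterval → Y)
    (X : Set Y) : List (G × unitInterval) → G → X → Y
  | [], g₀, x => g₀ • (x : Y)
  | (g, t) :: L, g₀, x => g • H (OmegaDR H X L g₀ x) t


section Aux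

variable {G Y : Type*} [Group G] [TopologicalSpace Y] [MulAction G Y]

/-- Core recursion of `OmegaDR` with arbitrary base point. -/
def CoreDR (H : Y → unitInterval → Y) : List (G × unitInterval) → Y → Y
  | [], y => y
  | (g, t) :: L, y => g • H (CoreDR H L y) t

lemma OmegaDR_eq_CoreDR (H : Y → unitInterval → Y) (X : Set Y) :
    ∀ (L : List (G × unitInterval)) (g₀ : G) (x : X),
      OmegaDR H X L g₀ x = CoreDR H L (g₀ • (x : Y))
  | [], g₀, x => rfl
  | (g, t) :: L, g₀, x => by
      simp [OmegaDR, CoreDR, OmegaDR_eq_CoreDR H X L g₀ x]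

lemma CoreDR_append (H : Y → unitInterval → Y) :
    ∀ (L₁ L₂ : List (G × unitInterval)) (y : Y),
      CoreDR H (L₁ ++ L₂) y = CoreDR H L₁ (CoreDR H L₂ y)
  | [], L₂, y => rfl
  | (g, t) :: L₁, L₂, y => by
      simp [CoreDR, CoreDR_append H L₁ L₂ y]

lemma CoreDR_continuous (H : Y → unitInterval → Y)
    (hact : ∀ g : G, Continuous fun y : Y => g • y)
    (hHcont : Continuous fun p : Y × unitInterval => H p.1 p.2) :
    ∀ (n : ℕ) (gs : Fin n → G),
      Continuous fun p : (Fin n → unitInterval) × Y =>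
        CoreDR H (List.ofFn fun i => (gs i, p.1 i)) p.2 := by
  intro n
  induction n with
  | zero => intro gs; simpa [CoreDR] using continuous_snd
  | succ n ih =>
      intro gs
      have hrest : Continuous fun p : (Fin (n+1) → unitInterval) × Y =>
          CoreDR H (List.ofFn fun i : Fin n => (gs i.succ, p.1 i.succ)) p.2 := by
        exact (ih (fun i => gs i.succ)).comp
          (by fun_prop : Continuous fun p : (Fin (n+1) → unitInterval) × Y =>
            ((fun i : Fin n => p.1 i.succ), p.2))
      have : Continuous fun p : (Fin (n+1) → unitInterval) × Y =>
          gs 0 • H (CoreDR H (List.ofFn fun i : Fin n => (gs i.succ, p.1 i.succ)) p.2)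
            (p.1 0) := by
        exact (hact (gs 0)).comp (hHcont.comp (hrest.prodMk (by fun_prop)))
      simpa [List.ofFn_succ, CoreDR] using this

end Aux

/-- If `G` acts continuously (by homeomorphisms) on `Y` and `H : Y × [0,1] → Y` is a
continuous map with `H_0(Y) = X`, `H_0|_X = id_X`, `H_1 = id_Y` and
`H_t ∘ H_{t'} = H_{t·t'}`, then `Ψ := H_0 ∘ Ω` is a strong homotopy action of `G`
on the subspace `X`. -/
theorem strongHomotopyAction_of_deformation_retraction
    {G Y : Type*} [Group G] [TopologicalSpace Y] [MulAction G Y]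
    (hact : ∀ g : G, Continuous fun y : Y => g • y)
    (H : Y → unitInterval → Y)
    (hHcont : Continuous fun p : Y × unitInterval => H p.1 p.2)
    (X : Set Y)
    (hH0 : Set.range (fun y => H y 0) = X)
    (hH0id : ∀ x ∈ X, H x 0 = x)
    (hH1 : ∀ y : Y, H y 1 = y)
    (hHcomp : ∀ (y : Y) (t t' : unitInterval), H (H y t') t = H y (t * t')) :
    ∃ Ψ : StrongHomotopyAction G X,
      ∀ (L : List (G × unitInterval)) (g₀ : G) (x : X),
        (Ψ.toFun L g₀ x : Y) = H (OmegaDR H X L g₀ x) 0 := by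
  have hmem : ∀ y : Y, H y 0 ∈ X := fun y => hH0 ▸ Set.mem_range_self y
  have habs : ∀ (y : Y) (t : unitInterval), H (H y t) 0 = H y 0 := fun y t => by
    rw [hHcomp, zero_mul]
  -- key: for x ∈ X, H x t = x for all t? no — but H x t with x ∈ X:
  have hfix : ∀ x ∈ X, ∀ t, H x t = x := fun x hx t => by
    rw [← hH0id x hx, hHcomp, mul_zero, hH0id x hx]
  refine ⟨⟨fun L g₀ x => ⟨H (CoreDR H L (g₀ • (x : Y))) 0, hmem _⟩,
      ?_, ?_, ?_, ?_, ?_, ?_, ?_, ?_⟩,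
      fun L g₀ x => by simp [OmegaDR_eq_CoreDR]⟩
  · intro n gs g₀
    refine Continuous.subtype_mk ?_ _
    have := (CoreDR_continuous H hact hHcont n gs).comp
      (by fun_prop (disch := exact hact g₀) :
        Continuous fun p : (Fin n → unitInterval) × X => (p.1, g₀ • (p.2 : Y)))
    exact hHcont.comp (this.prodMk continuous_const)
  · intro L₁ L₂ g g₀ x
    apply Subtype.ext
    simp [CoreDR_append, CoreDR]
  · intro L₁ L₂ g g' t g₀ x
    apply Subtype.ext
    simp [CoreDR_append, CoreDR, hH1, mul_smul]
  · intro L g g₀ x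
    apply Subtype.ext
    simp [CoreDR_append, CoreDR, hH1, mul_smul]
  · intro t L g₀ x
    apply Subtype.ext
    simp [CoreDR, habs]
  · intro L₁ L₂ g t t' g₀ x
    apply Subtype.ext
    simp [CoreDR_append, CoreDR, hHcomp]
  · intro L g t x
    apply Subtype.ext
    simp [CoreDR_append, CoreDR, hfix (x : Y) x.2]
  · intro x
    apply Subtype.ext
    simp [CoreDR, hH0id (x : Y) x.2]
end

section
/- Let Ψ be a strong homotopy action of a group G on a topological space X, and let M, c_g be as defined. Then for all g, h ∈ G and all f ∈ M: c_g(f) ∈ M, c_e(f) = f, and c_g(c_h(f)) = c_{g·h}(f). Hence (g, f) ↦ c_g(f) defines a left action of G on M. -/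
open unitInterval ENNReal

variable {G X : Type*} [Group G] [TopologicalSpace X]

/-- `c_g(f) := (w ↦ f(w, 1, g))`: the element `w = (L, h)` is extended by the time `1`
and the group element `g`. -/
def cMap (g : G) (f : List (G × unitInterval) → G → X) :
    List (G × unitInterval) → G → X :=
  fun L h => f (L ++ [(h, (1 : unitInterval))]) g

/-- `H(f, t) := (w ↦ f(w, t, e))`. -/
def Hmap (f : List (G × unitInterval) → G → X) (t : unitInterval) :
    List (G × unitInterval) → G → X :=
  fun L h => f (L ++ [(h, t)]) (1 : G)

/-- `p(x) := (w ↦ Ψ(w, x))`. -/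
def pMap (Ψ : StrongHomotopyAction G X) (x : X) : List (G × unitInterval) → G → X :=
  fun L h => Ψ.toFun L h x

/-- The set `M` of maps `∐_j ((G × [0,1])^j × G) → X` of the form
`w ↦ Ψ(w, t_α, g_{α-1}, …, t_1, g_0, x)` for some `α ≥ 0`, `t_i ∈ [0,1]`, `g_i ∈ G`
and `x ∈ X` (for `α = 0` this is `w ↦ Ψ(w, x)`, i.e. `p(x)`). -/
def Mset (Ψ : StrongHomotopyAction G X) : Set (List (G × unitInterval) → G → X) :=
  { f | (∃ x : X, f = pMap Ψ x) ∨
        ∃ (t : unitInterval) (L' : List (G × unitInterval)) (g₀ : G) (x : X),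
          f = fun L h => Ψ.toFun (L ++ (h, t) :: L') g₀ x }

/-- `(g, f) ↦ c_g(f)` defines a left action of `G` on `M`: `M` is stable under each
`c_g`, `c_e` is the identity on `M`, and `c_g ∘ c_h = c_{g·h}` on `M`. -/
theorem cMap_action {G X : Type*} [Group G] [TopologicalSpace X]
    (Ψ : StrongHomotopyAction G X) :
    ∀ (g h : G) (f : List (G × unitInterval) → G → X), f ∈ Mset Ψ →
      cMap g f ∈ Mset Ψ ∧ cMap (1 : G) f = f ∧ cMap g (cMap h f) = cMap (g * h) f := by
  rintro g h f (⟨x, rfl⟩ | ⟨t, L', g₀, x, rfl⟩)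
  · refine ⟨Or.inr ⟨1, [], g, x, rfl⟩, ?_, ?_⟩
    · funext L k
      simp only [cMap, pMap]
      exact Ψ.id_last L k 1 x
    · funext L k
      simp only [cMap, pMap, List.append_assoc, List.cons_append, List.nil_append]
      rw [show L ++ [(k, (1:unitInterval)), (g, 1)] = (L ++ [(k,1)]) ++ [(g,1)] by simp]
      exact Ψ.act_one_last (L ++ [(k, 1)]) g h x
  · refine ⟨Or.inr ⟨1, (g, t) :: L', g₀, x, ?_⟩, ?_, ?_⟩
    · funext L k
      simp [cMap, List.append_assoc]
    · funext L k
      simp only [cMap, List.append_assoc, List.cons_append, List.nil_append]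
      rw [Ψ.id_mid L L' k 1 t g₀ x, one_mul]
    · funext L k
      simp only [cMap, List.append_assoc, List.cons_append, List.nil_append]
      rw [show L ++ (k, 1) :: (g, 1) :: (h, t) :: L' = (L ++ [(k,1)]) ++ (g, 1) :: (h, t) :: L' by simp,
        Ψ.act_one_mid (L ++ [(k,1)]) L' g h t g₀ x]
      simp
end

section
/- Let Ψ be a strong homotopy action of a group G on a topological space X, and let M, H, p be as defined. Then for all f ∈ M and t, t' ∈ [0,1]: H(f, t) ∈ M; H(f, 1) = f; H(H(f, t'), t) = H(f, t·t'); H(f, 0) = p(f(e)); and consequently { H(f, 0) | f ∈ M } = p(X). In particular H is a deformation retraction of M onto p(X) satisfying H_t ∘ H_{t'} = H_{t·t'}. -/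
open unitInterval ENNReal

variable {G X : Type*} [Group G] [TopologicalSpace X]

lemma Hmap_pMap (Ψ : StrongHomotopyAction G X) (x : X) (t : unitInterval) :
    Hmap (pMap Ψ x) t = pMap Ψ x := by
  funext L h
  simp [Hmap, pMap, Ψ.id_last]

lemma Hmap_form (Ψ : StrongHomotopyAction G X) (t t₀ : unitInterval)
    (L' : List (G × unitInterval)) (g₀ : G) (x : X) :
    Hmap (fun L h => Ψ.toFun (L ++ (h, t₀) :: L') g₀ x) t
      = fun L h => Ψ.toFun (L ++ (h, t * t₀) :: L') g₀ x := by
  funext L h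
  show Ψ.toFun ((L ++ [(h, t)]) ++ ((1 : G), t₀) :: L') g₀ x = _
  rw [List.append_assoc]
  simpa using Ψ.id_mid L L' h t t₀ g₀ x

/-- `H` is a deformation retraction of `M` onto `p(X)` satisfying
`H_t ∘ H_{t'} = H_{t·t'}`: for `f ∈ M` and `t, t' ∈ [0,1]` we have `H(f,t) ∈ M`,
`H(f,1) = f`, `H(H(f,t'),t) = H(f, t·t')`, `H(f,0) = p(f(e))`; consequently
`{ H(f,0) | f ∈ M } = p(X)`. -/
theorem Hmap_deformation_retraction {G X : Type*} [Group G] [TopologicalSpace X]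
    (Ψ : StrongHomotopyAction G X) :
    (∀ f ∈ Mset Ψ, ∀ t t' : unitInterval,
      Hmap f t ∈ Mset Ψ ∧
      Hmap f 1 = f ∧
      Hmap (Hmap f t') t = Hmap f (t * t') ∧
      Hmap f 0 = pMap Ψ (f [] (1 : G))) ∧
    (fun f => Hmap f 0) '' Mset Ψ = Set.range (pMap Ψ) := by
  have main : ∀ f ∈ Mset Ψ, ∀ t t' : unitInterval,
      Hmap f t ∈ Mset Ψ ∧ Hmap f 1 = f ∧ Hmap (Hmap f t') t = Hmap f (t * t') ∧
      Hmap f 0 = pMap Ψ (f [] (1 : G)) := by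
    rintro f (⟨x, rfl⟩ | ⟨t₀, L', g₀, x, rfl⟩) t t'
    · refine ⟨Or.inl ⟨x, Hmap_pMap Ψ x t⟩, Hmap_pMap Ψ x 1, ?_, ?_⟩
      · rw [Hmap_pMap, Hmap_pMap, Hmap_pMap]
      · rw [Hmap_pMap]
        simp [pMap, Ψ.id_base]
    · refine ⟨Or.inr ⟨t * t₀, L', g₀, x, Hmap_form Ψ t t₀ L' g₀ x⟩, ?_, ?_, ?_⟩
      · rw [Hmap_form, one_mul]
      · rw [Hmap_form, Hmap_form, Hmap_form, mul_assoc]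
      · rw [Hmap_form, zero_mul]
        funext L h
        show Ψ.toFun (L ++ (h, (0 : unitInterval)) :: L') g₀ x = _
        rw [Ψ.act_zero]
        simp [pMap, Ψ.id_head]
  refine ⟨main, ?_⟩
  ext f
  constructor
  · rintro ⟨g, hg, rfl⟩
    exact ⟨g [] 1, ((main g hg 0 0).2.2.2).symm⟩
  · rintro ⟨x, rfl⟩
    exact ⟨pMap Ψ x, Or.inl ⟨x, rfl⟩, Hmap_pMap Ψ x 0⟩
end

section
/- Let Ψ be a strong homotopy action of a group G on a topological space X, and let M, c, H, p be as defined. Define Ω_M on ∐_{j≥0}((G × [0,1])^j × G × M) inductively by Ω_M(g_0, f) := c_{g_0}(f) and Ω_M(g_j, t_j, g_{j-1}, …) := c_{g_j}(H(Ω_M(g_{j-1}, …), t_j)) for j ≥ 1, and set Ψ_M := (f ↦ H(f, 0)) ∘ Ω_M. Then for all j ≥ 0, g_0, …, g_j ∈ G, t_1, …, t_j ∈ [0,1] and x ∈ X: Ψ_M(g_j, t_j, …, g_1, t_1, g_0, p(x)) = p(Ψ(g_j, t_j, …, g_1, t_1, g_0, x)). That is, the strong homotopy action associated to the deformation retraction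 (M, H) with G-action c coincides, under the identification of X with p(X) via p, with the original strong homotopy action Ψ. -/
open unitInterval ENNReal

variable {G X : Type*} [Group G] [TopologicalSpace X]

/-- `Ω_M`, defined inductively by `Ω_M(g₀, f) := c_{g₀}(f)` and
`Ω_M(g_j, t_j, g_{j-1}, …) := c_{g_j}(H(Ω_M(g_{j-1}, …), t_j))`. -/
def OmegaM {G X : Type*} [Group G] [TopologicalSpace X] :
    List (G × unitInterval) → G → (List (G × unitInterval) → G → X) →
      (List (G × unitInterval) → G → X)
  | [], g₀, f => cMap g₀ f
  | (g, t) :: L, g₀, f => cMap g (Hmap (OmegaM L g₀ f) t)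


private def ileave {G : Type*} [Group G] : List (G × unitInterval) → List (G × unitInterval)
  | [] => []
  | (g, t) :: L => (g, t) :: ((1 : G), (1 : unitInterval)) :: ileave L

private lemma lemA {G X : Type*} [Group G] [TopologicalSpace X]
    (Ψ : StrongHomotopyAction G X) :
    ∀ (L P : List (G × unitInterval)) (g₀ : G) (x : X),
      Ψ.toFun (P ++ ileave L) g₀ x = Ψ.toFun (P ++ L) g₀ x
  | [], _, _, _ => rfl
  | (g, t) :: L, P, g₀, x => by
    show Ψ.toFun (P ++ (g, t) :: ((1 : G), (1 : unitInterval)) :: ileave L) g₀ x = _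
    rw [Ψ.id_mid, mul_one]
    have h := lemA Ψ L (P ++ [(g, t)]) g₀ x
    simpa using h

private lemma lemB {G X : Type*} [Group G] [TopologicalSpace X]
    (Ψ : StrongHomotopyAction G X) :
    ∀ (L : List (G × unitInterval)) (g₀ : G) (x : X)
      (L' : List (G × unitInterval)) (h : G),
      OmegaM L g₀ (pMap Ψ x) L' h
        = Ψ.toFun ((L' ++ [(h, (1 : unitInterval))]) ++ ileave L) g₀ x
  | [], g₀, x, L', h => by simp [OmegaM, cMap, pMap, ileave]
  | (g, t) :: L, g₀, x, L', h => by
    show Hmap (OmegaM L g₀ (pMap Ψ x)) t (L' ++ [(h, (1 : unitInterval))]) g = _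
    show OmegaM L g₀ (pMap Ψ x) ((L' ++ [(h, (1 : unitInterval))]) ++ [(g, t)]) 1 = _
    rw [lemB Ψ L g₀ x]
    simp [ileave]

/-- The strong homotopy action `Ψ_M := H(·,0) ∘ Ω_M` associated to the deformation
retraction `(M, H)` with `G`-action `c` coincides, under the identification of `X`
with `p(X)` via `p`, with the original strong homotopy action `Ψ`. -/
theorem associated_action_eq {G X : Type*} [Group G] [TopologicalSpace X]
    (Ψ : StrongHomotopyAction G X) :
    ∀ (L : List (G × unitInterval)) (g₀ : G) (x : X),
      Hmap (OmegaM L g₀ (pMap Ψ x)) 0 = pMap Ψ (Ψ.toFun L g₀ x) := by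
  intro L g₀ x
  funext L' h
  show OmegaM L g₀ (pMap Ψ x) (L' ++ [(h, (0 : unitInterval))]) 1 = _
  rw [lemB Ψ L g₀ x]
  have hA := lemA Ψ L (L' ++ [(h, (0 : unitInterval)), ((1 : G), (1 : unitInterval))]) g₀ x
  simp only [List.append_assoc, List.cons_append, List.nil_append] at hA ⊢
  rw [hA, Ψ.act_zero, Ψ.id_head]
  rfl
end

section
/- Let (Z, d) be a pseudometric space, ι an index set, N, k ≥ 1 natural numbers, and a : ι → Z → [0,∞) a family of functions such that each a_i is 1-Lipschitz, for every z ∈ Z the set { i ∈ ι | a_i(z) ≠ 0 } has at most N elements, and s(z) := ∑_{i ∈ ι} a_i(z) ≥ 4Nk for every z ∈ Z. Then for all x, y ∈ Z: ∑_{i ∈ ι} |a_i(x)/s(x) − a_i(y)/s(y)| ≤ d(x,y)/k. That is, the map z ↦ (a_i(z)/s(z))_{i ∈ ι} is (1/k)-Lipschitz into ℓ¹(ι). -/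
/-!
Writing `U = ∑ u` and `V = ∑ v`, one has
`u/U - v/V = (u - v)/U + v (V - U)/(U V)`, so the `ℓ¹`-distance of the normalized vectors is
at most `2 ∑ |u - v| / U`. For `u = a(x)`, `v = a(y)` only the at most `2N` indices in the
supports at `x` and `y` contribute, each with `|a_i(x) - a_i(y)| ≤ d(x,y)`, and `U ≥ 4Nk`.
-/

open Finset

theorem Finset.sum_abs_div_sum_sub_div_sum_le {ι : Type*} (s : Finset ι) (u v : ι → ℝ)
    (hv : ∀ i ∈ s, 0 ≤ v i) (hU : 0 < ∑ i ∈ s, u i) (hV : 0 < ∑ i ∈ s, v i) :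
    ∑ i ∈ s, |u i / ∑ j ∈ s, u j - v i / ∑ j ∈ s, v j| ≤
      2 * (∑ i ∈ s, |u i - v i|) / ∑ i ∈ s, u i := by
  set U := ∑ j ∈ s, u j
  set V := ∑ j ∈ s, v j
  have hVU : |V - U| ≤ ∑ i ∈ s, |u i - v i| := by
    rw [← sum_sub_distrib]
    simpa only [abs_sub_comm] using abs_sum_le_sum_abs (fun i => v i - u i) s
  have hterm : ∀ i ∈ s,
      |u i / U - v i / V| ≤ |u i - v i| / U + v i * |V - U| / (U * V) := fun i hi =>
    calc |u i / U - v i / V| = |(u i - v i) / U + v i * (V - U) / (U * V)| := by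
          congr 1; field_simp; ring
      _ ≤ |(u i - v i) / U| + |v i * (V - U) / (U * V)| := abs_add_le _ _
      _ = |u i - v i| / U + v i * |V - U| / (U * V) := by
          rw [abs_div, abs_div, abs_mul, abs_of_pos hU, abs_of_nonneg (hv i hi),
            abs_of_pos (mul_pos hU hV)]
  calc ∑ i ∈ s, |u i / U - v i / V|
      ≤ ∑ i ∈ s, (|u i - v i| / U + v i * |V - U| / (U * V)) := sum_le_sum hterm
    _ = (∑ i ∈ s, |u i - v i|) / U + |V - U| / U := by
        rw [sum_add_distrib, ← sum_div, ← sum_div, ← sum_mul]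
        change _ + V * |V - U| / (U * V) = _
        field_simp
    _ ≤ 2 * (∑ i ∈ s, |u i - v i|) / U := by
        rw [two_mul, add_div]
        gcongr

theorem sum_abs_sub_le_card_mul_dist {Z ι : Type*} [PseudoMetricSpace Z] {a : ι → Z → ℝ}
    (hlip : ∀ i, LipschitzWith 1 (a i)) (s : Finset ι) (x y : Z) :
    ∑ i ∈ s, |a i x - a i y| ≤ #s * dist x y := by
  calc ∑ i ∈ s, |a i x - a i y| ≤ ∑ _i ∈ s, dist x y :=
        sum_le_sum fun i _ => by simpa [Real.dist_eq] using (hlip i).dist_le_mul x y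
    _ = #s * dist x y := by rw [sum_const, nsmul_eq_mul]

/-- If every `a i` is a nonnegative `1`-Lipschitz function on a pseudometric space `Z`,
at each point at most `N` of them are nonzero, and `s(z) := ∑ᵢ a i z ≥ 4Nk`, then
`z ↦ (a i z / s z)ᵢ` is `(1/k)`-Lipschitz into `ℓ¹(ι)`:
`∑ᵢ |a i x / s x − a i y / s y| ≤ d(x,y)/k`. -/
theorem tsum_abs_normalized_sub_le {Z : Type*} [PseudoMetricSpace Z] {ι : Type*}
    (N k : ℕ) (hN : 1 ≤ N) (hk : 1 ≤ k) (a : ι → Z → ℝ)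
    (hnonneg : ∀ i z, 0 ≤ a i z)
    (hlip : ∀ i, LipschitzWith 1 (a i))
    (hcard : ∀ z : Z, {i | a i z ≠ 0}.encard ≤ (N : ℕ∞))
    (hsum : ∀ z : Z, 4 * N * k ≤ ∑' i, a i z) :
    ∀ x y : Z, ∑' i, |a i x / (∑' j, a j x) - a i y / (∑' j, a j y)| ≤ dist x y / k := by
  classical
  intro x y
  have hsupp z := Set.encard_le_coe_iff_finite_ncard_le.mp (hcard z)
  set F := (hsupp x).1.toFinset ∪ (hsupp y).1.toFinset
  have hF : #F ≤ 2 * N := by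
    grw [card_union_le, ← Set.ncard_eq_toFinset_card _ (hsupp x).1,
      ← Set.ncard_eq_toFinset_card _ (hsupp y).1, (hsupp x).2, (hsupp y).2, two_mul]
  have hvanish : ∀ i ∉ F, a i x = 0 ∧ a i y = 0 := by simp [F]
  have hsx : ∑' j, a j x = ∑ j ∈ F, a j x := tsum_eq_sum fun i hi => (hvanish i hi).1
  have hsy : ∑' j, a j y = ∑ j ∈ F, a j y := tsum_eq_sum fun i hi => (hvanish i hi).2
  have h4Nk : (0 : ℝ) < 4 * N * k := by positivity
  have hUx := hsx ▸ hsum x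
  rw [hsx, hsy, tsum_eq_sum fun i hi => by simp [hvanish i hi]]
  calc _ ≤ 2 * (∑ i ∈ F, |a i x - a i y|) / ∑ i ∈ F, a i x :=
        F.sum_abs_div_sum_sub_div_sum_le _ _ (fun i _ => hnonneg i y)
          (h4Nk.trans_le hUx) (h4Nk.trans_le (hsy ▸ hsum y))
    _ ≤ 2 * (2 * N * dist x y) / (4 * N * k) := by
        gcongr
        grw [sum_abs_sub_le_card_mul_dist hlip, hF, Nat.cast_mul, Nat.cast_ofNat]
    _ = dist x y / k := by field_simp; ring
end

section
/- Let (Z, d) be a metric space, N, k ≥ 1 natural numbers, and 𝒰 a collection of open subsets of Z covering Z such that every U ∈ 𝒰 has nonempty complement, every point of Z lies in at most N members of 𝒰, and for every z ∈ Z there exists U ∈ 𝒰 containing the closed ball of radius 4Nk around z. For U ∈ 𝒰 define a_U(z) := inf{ d(z,w) | w ∈ Z ∖ U } and s(z) := ∑_{U ∈ 𝒰} a_U(z) (a finite sum, since a_U(z) = 0 unless z ∈ U). Then s(z) ≥ 4Nk for all z, and for all x, y ∈ Z: ∑_{U ∈ 𝒰} |a_U(x)/s(x) − a_U(y)/s(y)|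 ≤ d(x,y)/k. -/
/-!
Each `a_U = infDist · Uᶜ` is `1`-Lipschitz and nonnegative, and at any two points `x, y` at most
`2N` of them are nonzero. Normalising a nonnegative vector by its sum moves it, in `ℓ¹`, by at most
twice the `ℓ¹`-change of the vector divided by the sum, so the partition of unity moves by at most
`2 · 2N · d(x,y) / s(x)`. The ball condition gives `s ≥ 4Nk`, which turns this into `d(x,y) / k`.
-/

open Metric

theorem Finset.sum_abs_div_sum_sub_div_sum_le_s13 {ι : Type*} (t : Finset ι) {f g : ι → ℝ}
    (hg : ∀ i ∈ t, 0 ≤ g i) (hf_pos : 0 < ∑ i ∈ t, f i) (hg_pos : 0 < ∑ i ∈ t, g i) :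
    ∑ i ∈ t, |f i / ∑ j ∈ t, f j - g i / ∑ j ∈ t, g j| ≤
      2 * (∑ i ∈ t, |f i - g i|) / ∑ i ∈ t, f i := by
  set sf := ∑ j ∈ t, f j
  set sg := ∑ j ∈ t, g j
  have hsum_sub : |sg - sf| ≤ ∑ i ∈ t, |f i - g i| := by
    rw [← Finset.sum_sub_distrib]
    refine (Finset.abs_sum_le_sum_abs _ _).trans_eq (Finset.sum_congr rfl fun i _ => ?_)
    exact abs_sub_comm _ _
  have hterm : ∀ i ∈ t,
      |f i / sf - g i / sg| ≤ |f i - g i| / sf + g i * |sg - sf| / (sf * sg) := by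
    intro i hi
    have hsplit : f i / sf - g i / sg = (f i - g i) / sf + g i * (sg - sf) / (sf * sg) := by
      field_simp
      ring
    rw [hsplit]
    refine (abs_add_le _ _).trans_eq ?_
    rw [abs_div, abs_div, abs_mul, abs_of_pos hf_pos, abs_of_nonneg (hg i hi),
      abs_of_pos (mul_pos hf_pos hg_pos)]
  calc ∑ i ∈ t, |f i / sf - g i / sg|
      ≤ ∑ i ∈ t, (|f i - g i| / sf + g i * |sg - sf| / (sf * sg)) := Finset.sum_le_sum hterm
    _ = (∑ i ∈ t, |f i - g i|) / sf + |sg - sf| / sf := by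
      rw [Finset.sum_add_distrib, ← Finset.sum_div, ← Finset.sum_div, ← Finset.sum_mul,
        mul_comm sf sg, mul_div_mul_left _ _ hg_pos.ne']
    _ ≤ 2 * (∑ i ∈ t, |f i - g i|) / sf := by
      rw [two_mul, add_div]
      gcongr

theorem Finset.sum_abs_div_sum_sub_div_sum_le_of_lipschitz {ι Z : Type*} [PseudoMetricSpace Z]
    (t : Finset ι) {a : ι → Z → ℝ} (ha : ∀ i, LipschitzWith 1 (a i)) (ha_nonneg : ∀ i z, 0 ≤ a i z)
    {x y : Z} (hx : 0 < ∑ i ∈ t, a i x) (hy : 0 < ∑ i ∈ t, a i y) :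
    ∑ i ∈ t, |a i x / ∑ j ∈ t, a j x - a i y / ∑ j ∈ t, a j y| ≤
      2 * (t.card * dist x y) / ∑ i ∈ t, a i x := by
  refine (t.sum_abs_div_sum_sub_div_sum_le_s13 (fun i _ => ha_nonneg i y) hx hy).trans ?_
  gcongr
  rw [← nsmul_eq_mul]
  refine Finset.sum_le_card_nsmul _ _ _ fun i _ => ?_
  simpa [Real.dist_eq] using (ha i).dist_le_mul x y

namespace Metric

variable {Z : Type*} [PseudoMetricSpace Z]

theorem le_infDist_compl_of_closedBall_subset {z : Z} {r : ℝ} {U : Set Z} (hU : Uᶜ.Nonempty)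
    (h : closedBall z r ⊆ U) : r ≤ infDist z Uᶜ :=
  (le_infDist hU).2 fun _ hw => le_of_not_gt fun hlt => hw (h (mem_closedBall'.2 hlt.le))

theorem exists_finset_infDist_compl_eq_zero {𝒰 : Set (Set Z)} {N : ℕ} {z : Z}
    (h : {U ∈ 𝒰 | z ∈ U}.encard ≤ N) :
    ∃ t : Finset 𝒰, t.card ≤ N ∧ ∀ U ∉ t, infDist z (U : Set Z)ᶜ = 0 := by
  have hle : {U : 𝒰 | z ∈ (U : Set Z)}.encard ≤ N := by
    rw [← Subtype.val_injective.encard_image]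
    exact (Set.encard_le_encard (by rintro _ ⟨U, hU, rfl⟩; exact ⟨U.2, hU⟩)).trans h
  have hfin := Set.finite_of_encard_le_coe hle
  refine ⟨hfin.toFinset, ?_, fun U hU => infDist_zero_of_mem fun hz => hU (hfin.mem_toFinset.2 hz)⟩
  rw [hfin.encard_eq_coe_toFinset_card] at hle
  exact_mod_cast hle

end Metric

theorem cover_partition_lipschitz_general {Z : Type*} [MetricSpace Z]
    (N k : ℕ) (hN : 1 ≤ N) (hk : 1 ≤ k) (𝒰 : Set (Set Z))
    (hproper : ∀ U ∈ 𝒰, Uᶜ.Nonempty)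
    (hdim : ∀ z : Z, {U ∈ 𝒰 | z ∈ U}.encard ≤ (N : ℕ∞))
    (hball : ∀ z : Z, ∃ U ∈ 𝒰, Metric.closedBall z (4 * N * k) ⊆ U) :
    (∀ z : Z, 4 * N * k ≤ ∑' U : 𝒰, Metric.infDist z ((U : Set Z))ᶜ) ∧
    ∀ x y : Z,
      ∑' U : 𝒰,
        |Metric.infDist x ((U : Set Z))ᶜ / (∑' V : 𝒰, Metric.infDist x ((V : Set Z))ᶜ) -
         Metric.infDist y ((U : Set Z))ᶜ / (∑' V : 𝒰, Metric.infDist y ((V : Set Z))ᶜ)|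
        ≤ dist x y / k := by
  classical
  have hs : ∀ z : Z, 4 * N * k ≤ ∑' U : 𝒰, infDist z (U : Set Z)ᶜ := fun z => by
    obtain ⟨U, hU, hUz⟩ := hball z
    obtain ⟨t, -, ht⟩ := exists_finset_infDist_compl_eq_zero (hdim z)
    exact (le_infDist_compl_of_closedBall_subset (hproper U hU) hUz).trans
      ((summable_of_ne_finset_zero ht).le_tsum ⟨U, hU⟩ fun _ _ => infDist_nonneg)
  refine ⟨hs, fun x y => ?_⟩
  obtain ⟨tx, htx_card, htx⟩ := exists_finset_infDist_compl_eq_zero (hdim x)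
  obtain ⟨ty, hty_card, hty⟩ := exists_finset_infDist_compl_eq_zero (hdim y)
  have hx : ∀ U ∉ tx ∪ ty, infDist x (U : Set Z)ᶜ = 0 :=
    fun U hU => htx U (Finset.notMem_union.1 hU).1
  have hy : ∀ U ∉ tx ∪ ty, infDist y (U : Set Z)ᶜ = 0 :=
    fun U hU => hty U (Finset.notMem_union.1 hU).2
  have hsx := hs x
  have hsy := hs y
  rw [tsum_eq_sum hx] at hsx ⊢
  rw [tsum_eq_sum hy] at hsy ⊢
  rw [tsum_eq_sum fun U hU => by simp [hx U hU, hy U hU]]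
  have hNk : (0 : ℝ) < 4 * N * k := by positivity
  have hcard : ((tx ∪ ty).card : ℝ) ≤ 2 * N := by
    exact_mod_cast (Finset.card_union_le tx ty).trans (by omega)
  calc _ ≤ 2 * ((tx ∪ ty).card * dist x y) / ∑ U ∈ tx ∪ ty, infDist x (U : Set Z)ᶜ :=
        (tx ∪ ty).sum_abs_div_sum_sub_div_sum_le_of_lipschitz (fun _ => lipschitz_infDist_pt _)
          (fun _ _ => infDist_nonneg) (hNk.trans_le hsx) (hNk.trans_le hsy)
    _ ≤ 2 * (2 * N * dist x y) / (4 * N * k) := by gcongr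
    _ = dist x y / k := by field_simp; ring

/-- Let `𝒰` be an open cover of a metric space `Z` such that every `U ∈ 𝒰` has a
nonempty complement, every point lies in at most `N` members of `𝒰`, and every closed
ball of radius `4Nk` is contained in some member. With
`a_U(z) := inf { d(z,w) | w ∉ U }` and `s(z) := ∑_{U ∈ 𝒰} a_U(z)` one has
`s(z) ≥ 4Nk` and `∑_{U ∈ 𝒰} |a_U(x)/s(x) − a_U(y)/s(y)| ≤ d(x,y)/k`. -/
theorem cover_partition_lipschitz {Z : Type*} [MetricSpace Z]
    (N k : ℕ) (hN : 1 ≤ N) (hk : 1 ≤ k) (𝒰 : Set (Set Z))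
    (hopen : ∀ U ∈ 𝒰, IsOpen U)
    (hcover : ∀ z : Z, ∃ U ∈ 𝒰, z ∈ U)
    (hproper : ∀ U ∈ 𝒰, Uᶜ.Nonempty)
    (hdim : ∀ z : Z, {U ∈ 𝒰 | z ∈ U}.encard ≤ (N : ℕ∞))
    (hball : ∀ z : Z, ∃ U ∈ 𝒰, Metric.closedBall z (4 * N * k) ⊆ U) :
    (∀ z : Z, 4 * N * k ≤ ∑' U : 𝒰, Metric.infDist z ((U : Set Z))ᶜ) ∧
    ∀ x y : Z,
      ∑' U : 𝒰,
        |Metric.infDist x ((U : Set Z))ᶜ / (∑' V : 𝒰, Metric.infDist x ((V : Set Z))ᶜ) -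
         Metric.infDist y ((U : Set Z))ᶜ / (∑' V : 𝒰, Metric.infDist y ((V : Set Z))ᶜ)|
        ≤ dist x y / k :=
  cover_partition_lipschitz_general N k hN hk 𝒰 hproper hdim hball
end

section
/- Let G be a group, (X,d_X) a metric space, Ψ a strong homotopy action of G on X, T ⊆ G a finite symmetric subset with e ∈ T, and α ≥ 1 a natural number. Let g' ∈ G, h ∈ T, g_0, …, g_{α-1} ∈ T, t_1, …, t_α ∈ [0,1] and y ∈ X. Set k := g_{α-1} ⋯ g_0, x' := Ψ(e, t_α, g_{α-1}, t_{α-1}, …, t_1, g_0, y) and x := Ψ(h, t_α, g_{α-1}, t_{α-1}, …, t_1, g_0, y), and assume k ∈ T and h·k ∈ T. Then both (g'·h⁻¹, x) and (g', x') belong to S¹_{Ψ,T,α}(g'·k, y), and consequently d_{Ψ,T,α,Λ}((g'·h⁻¹, x), (g', x')) ≤ 2 for every Λ > 0. -/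
open unitInterval ENNReal

variable {G X : Type*} [Group G] [MetricSpace X]

lemma shaction_replicate_id (Ψ : StrongHomotopyAction G X) (t : unitInterval) :
    ∀ (n : ℕ) (x : X),
      Ψ.toFun (List.replicate n ((1 : G), t)) (1 : G) x = x := by
  intro n
  induction n with
  | zero => intro x; exact Ψ.id_base x
  | succ m ih =>
      intro x
      rw [List.replicate_succ, Ψ.id_head, ih]

lemma sOne_symm (Ψ : StrongHomotopyAction G X) (S : Set G) (k : ℕ) {z w : G × X}
    (hw : w ∈ sOne Ψ S k z) : z ∈ sOne Ψ S k w := by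
  obtain ⟨a, ha, b, hb, f, hf, f', hf', heq, hgr⟩ := hw
  exact ⟨b, hb, a, ha, f', hf', f, hf, heq.symm, by rw [hgr]; group⟩

/-- The key support estimate from the transfer section: with
`k := g_{α-1} ⋯ g_0`, `x' := Ψ(e, t_α, g_{α-1}, …, t_1, g_0, y)` and
`x := Ψ(h, t_α, g_{α-1}, …, t_1, g_0, y)`, both `(g'·h⁻¹, x)` and `(g', x')`
belong to `S¹_{Ψ,T,α}(g'·k, y)`, whence `d_{Ψ,T,α,Λ}((g'·h⁻¹,x),(g',x')) ≤ 2`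
for every `Λ > 0`.  Here the data `(t_α, g_{α-1}, t_{α-1}, …, t_1)` with `α ≥ 1`
is encoded by `t : unitInterval` together with the list `L'` of length `α - 1`,
so that `α = L'.length + 1`. -/
theorem transfer_support_estimate {G X : Type*} [Group G] [MetricSpace X]
    (Ψ : StrongHomotopyAction G X) (T : Set G) (hTfin : T.Finite)
    (hTsymm : ∀ s ∈ T, s⁻¹ ∈ T) (hTone : (1 : G) ∈ T)
    (g' h : G) (hh : h ∈ T) (t : unitInterval) (L' : List (G × unitInterval))
    (hL' : ∀ q ∈ L', q.1 ∈ T) (g₀ : G) (hg₀ : g₀ ∈ T) (y : X)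
    (hk : (L'.map Prod.fst).prod * g₀ ∈ T)
    (hhk : h * ((L'.map Prod.fst).prod * g₀) ∈ T) :
    ((g' * h⁻¹, Ψ.toFun ((h, t) :: L') g₀ y) ∈
        sOne Ψ T (L'.length + 1) (g' * ((L'.map Prod.fst).prod * g₀), y)) ∧
    ((g', Ψ.toFun (((1 : G), t) :: L') g₀ y) ∈
        sOne Ψ T (L'.length + 1) (g' * ((L'.map Prod.fst).prod * g₀), y)) ∧
    ∀ Λ : ℝ, 0 < Λ →
      qdist Ψ T (L'.length + 1) Λ
        (g' * h⁻¹, Ψ.toFun ((h, t) :: L') g₀ y)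
        (g', Ψ.toFun (((1 : G), t) :: L') g₀ y) ≤ 2 := by

  set k : G := (L'.map Prod.fst).prod * g₀ with hkdef
  set x : X := Ψ.toFun ((h, t) :: L') g₀ y with hxdef
  set x' : X := Ψ.toFun (((1 : G), t) :: L') g₀ y with hx'def
  -- the "identity" map of length α
  have hidmem : (fun z : X => Ψ.toFun (List.replicate (L'.length + 1) ((1 : G), t)) (1 : G) z)
      ∈ FMaps Ψ T (L'.length + 1) (1 : G) := by
    refine ⟨List.replicate (L'.length + 1) ((1 : G), t), 1, by simp, ?_, hTone, ?_, rfl⟩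
    · intro q hq
      rw [List.eq_of_mem_replicate hq]; exact hTone
    · simp
  have hid : ∀ z : X,
      Ψ.toFun (List.replicate (L'.length + 1) ((1 : G), t)) (1 : G) z = z :=
    shaction_replicate_id Ψ t (L'.length + 1)
  have hmem1 : (g' * h⁻¹, x) ∈ sOne Ψ T (L'.length + 1) (g' * k, y) := by
    refine ⟨h * k, hhk, 1, hTone,
      (fun z => Ψ.toFun ((h, t) :: L') g₀ z), ?_,
      (fun z => Ψ.toFun (List.replicate (L'.length + 1) ((1 : G), t)) (1 : G) z), hidmem,
      ?_, ?_⟩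
    · refine ⟨(h, t) :: L', g₀, by simp, ?_, hg₀, by simp [hkdef, mul_assoc], rfl⟩
      intro q hq
      rcases List.mem_cons.mp hq with h1 | h1
      · rw [h1]; exact hh
      · exact hL' q h1
    · simp [hid, hxdef]
    · group
  have hmem2 : (g', x') ∈ sOne Ψ T (L'.length + 1) (g' * k, y) := by
    refine ⟨k, hk, 1, hTone,
      (fun z => Ψ.toFun (((1 : G), t) :: L') g₀ z), ?_,
      (fun z => Ψ.toFun (List.replicate (L'.length + 1) ((1 : G), t)) (1 : G) z), hidmem,
      ?_, ?_⟩
    · refine ⟨((1 : G), t) :: L', g₀, by simp, ?_, hg₀, by simp [hkdef, mul_assoc], rfl⟩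
      intro q hq
      rcases List.mem_cons.mp hq with h1 | h1
      · rw [h1]; exact hTone
      · exact hL' q h1
    · simp [hid, hx'def]
    · group
  refine ⟨hmem1, hmem2, ?_⟩
  intro Λ hΛ
  have hchain : qdist Ψ T (L'.length + 1) Λ (g' * h⁻¹, x) (g', x') ≤
      qcost Ψ T (L'.length + 1) Λ (g' * h⁻¹, x) (g' * k, y) +
      qcost Ψ T (L'.length + 1) Λ (g' * k, y) (g', x') := by
    have : qdist Ψ T (L'.length + 1) Λ (g' * h⁻¹, x) (g', x') ≤
        ∑ i : Fin 2, qcost Ψ T (L'.length + 1) Λ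
          ((![(g' * h⁻¹, x), (g' * k, y), (g', x')] : Fin 3 → G × X) i.castSucc)
          (![(g' * h⁻¹, x), (g' * k, y), (g', x')] i.succ) := by
      refine le_trans (iInf_le _ 2) ?_
      refine le_trans (iInf_le _ ![(g' * h⁻¹, x), (g' * k, y), (g', x')]) ?_
      refine le_trans (iInf_le _ rfl) (iInf_le _ rfl)
    refine this.trans ?_
    rw [Fin.sum_univ_two]
    exact le_refl _
  refine hchain.trans ?_
  have h1 : qcost Ψ T (L'.length + 1) Λ (g' * h⁻¹, x) (g' * k, y) ≤ 1 := by
    refine le_trans (min_le_right _ _) ?_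
    rw [if_pos (sOne_symm Ψ T _ hmem1)]
  have h2 : qcost Ψ T (L'.length + 1) Λ (g' * k, y) (g', x') ≤ 1 := by
    refine le_trans (min_le_right _ _) ?_
    rw [if_pos hmem2]
  calc _ ≤ (1 : ℝ≥0∞) + 1 := add_le_add h1 h2
    _ = 2 := one_add_one_eq_two
end

section
/- Let (F, d) be a pseudometric space and Φ : ℝ × F → F a flow, i.e. Φ(0, z) = z and Φ(s, Φ(t, z)) = Φ(s + t, z) for all s, t ∈ ℝ, z ∈ F, satisfying d(Φ(τ, z), Φ(τ, w)) ≤ e^{|τ|}·d(z, w) for all τ ∈ ℝ and z, w ∈ F. Let m ≥ 1 be a natural number, T ∈ ℝ, α ≥ 0, ε₀ ≥ 0, let u_0, …, u_m ∈ F and τ_0, …, τ_{m-1} ∈ ℝ, and set s_i := ∑_{l < i} τ_l for 0 ≤ i ≤ m. Assume |s_i| ≤ α for all 0 ≤ i ≤ m and d(Φ(T, u_i), Φ(T + τ_i, u_{i+1})) ≤ ε₀ for all 0 ≤ i < m. Then d(Φ(T, u_0), Φ(T + s_m, u_m)) ≤ m·e^{α}·ε₀. -/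
/-- Telescoping estimate along a flow with exponential Lipschitz control:
if `|s_i| ≤ α` for all partial sums `s_i = τ_0 + ⋯ + τ_{i-1}` and
`d(Φ_T u_i, Φ_{T+τ_i} u_{i+1}) ≤ ε₀` for all `i < m`, then
`d(Φ_T u_0, Φ_{T+s_m} u_m) ≤ m·e^α·ε₀`. -/
theorem flow_telescoping_estimate {F : Type*} [PseudoMetricSpace F]
    (Φ : ℝ → F → F)
    (hflow₀ : ∀ z : F, Φ 0 z = z)
    (hflow : ∀ (s t : ℝ) (z : F), Φ s (Φ t z) = Φ (s + t) z)
    (hlip : ∀ (τ : ℝ) (z w : F), dist (Φ τ z) (Φ τ w) ≤ Real.exp |τ| * dist z w)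
    (m : ℕ) (hm : 1 ≤ m) (T α ε₀ : ℝ) (hα : 0 ≤ α) (hε₀ : 0 ≤ ε₀)
    (u : Fin (m + 1) → F) (τ : Fin m → ℝ)
    (hs : ∀ i : Fin (m + 1), |∑ l : Fin m, if (l : ℕ) < (i : ℕ) then τ l else 0| ≤ α)
    (hd : ∀ i : Fin m, dist (Φ T (u i.castSucc)) (Φ (T + τ i) (u i.succ)) ≤ ε₀) :
    dist (Φ T (u 0)) (Φ (T + ∑ l : Fin m, τ l) (u (Fin.last m))) ≤
      m * Real.exp α * ε₀ := by

  have key : ∀ k : ℕ, ∀ hk : k ≤ m,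
      dist (Φ T (u 0))
        (Φ (T + ∑ l : Fin m, if (l : ℕ) < k then τ l else 0) (u ⟨k, Nat.lt_succ_of_le hk⟩))
        ≤ k * Real.exp α * ε₀ := by
    intro k
    induction k with
    | zero =>
      intro hk
      simp [hflow₀]
    | succ k ih =>
      intro hk
      have hkm : k < m := hk
      have h1 := ih (le_of_lt hkm)
      have hS1 : (∑ l : Fin m, if (l : ℕ) < k + 1 then τ l else 0)
          = (∑ l : Fin m, if (l : ℕ) < k then τ l else 0) + τ ⟨k, hkm⟩ := by
        have : ∀ l : Fin m, (if (l : ℕ) < k + 1 then τ l else 0)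
            = (if (l : ℕ) < k then τ l else 0) + (if l = ⟨k, hkm⟩ then τ l else 0) := by
          intro l
          rcases lt_trichotomy (l : ℕ) k with h | h | h
          · simp [h, Nat.lt_succ_of_lt h, Fin.ext_iff, Nat.ne_of_lt h]
          · simp [h, Fin.ext_iff, Nat.lt_irrefl]
          · simp [Fin.ext_iff, Nat.ne_of_gt h, Nat.lt_succ_iff, not_le.mpr h,
              not_lt.mpr (le_of_lt h)]
        rw [Finset.sum_congr rfl (fun l _ => this l), Finset.sum_add_distrib,
          Finset.sum_ite_eq' Finset.univ (⟨k, hkm⟩ : Fin m) τ]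
        simp
      set S : ℝ := ∑ l : Fin m, if (l : ℕ) < k then τ l else 0 with hSdef
      rw [hS1]
      have hSα : |S| ≤ α := hs ⟨k, Nat.lt_succ_of_le (le_of_lt hkm)⟩
      have h2 : dist (Φ (T + S) (u ⟨k, Nat.lt_succ_of_le (le_of_lt hkm)⟩))
          (Φ (T + (S + τ ⟨k, hkm⟩)) (u ⟨k + 1, Nat.lt_succ_of_le hk⟩))
          ≤ Real.exp α * ε₀ := by
        have e1 : Φ (T + S) (u ⟨k, Nat.lt_succ_of_le (le_of_lt hkm)⟩)
            = Φ S (Φ T (u ⟨k, Nat.lt_succ_of_le (le_of_lt hkm)⟩)) := by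
          rw [hflow, add_comm]
        have e2 : Φ (T + (S + τ ⟨k, hkm⟩)) (u ⟨k + 1, Nat.lt_succ_of_le hk⟩)
            = Φ S (Φ (T + τ ⟨k, hkm⟩) (u ⟨k + 1, Nat.lt_succ_of_le hk⟩)) := by
          rw [hflow]; ring_nf
        rw [e1, e2]
        calc dist (Φ S (Φ T (u ⟨k, Nat.lt_succ_of_le (le_of_lt hkm)⟩)))
              (Φ S (Φ (T + τ ⟨k, hkm⟩) (u ⟨k + 1, Nat.lt_succ_of_le hk⟩)))
            ≤ Real.exp |S| * dist (Φ T (u ⟨k, Nat.lt_succ_of_le (le_of_lt hkm)⟩))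
              (Φ (T + τ ⟨k, hkm⟩) (u ⟨k + 1, Nat.lt_succ_of_le hk⟩)) := hlip _ _ _
          _ ≤ Real.exp α * ε₀ := by
              apply mul_le_mul (Real.exp_le_exp.mpr hSα) ?_ dist_nonneg
                (Real.exp_nonneg α)
              · exact hd ⟨k, hkm⟩
        
      calc dist (Φ T (u 0)) (Φ (T + (S + τ ⟨k, hkm⟩)) (u ⟨k + 1, Nat.lt_succ_of_le hk⟩))
          ≤ dist (Φ T (u 0)) (Φ (T + S) (u ⟨k, Nat.lt_succ_of_le (le_of_lt hkm)⟩))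
            + dist (Φ (T + S) (u ⟨k, Nat.lt_succ_of_le (le_of_lt hkm)⟩))
              (Φ (T + (S + τ ⟨k, hkm⟩)) (u ⟨k + 1, Nat.lt_succ_of_le hk⟩)) := dist_triangle _ _ _
        _ ≤ k * Real.exp α * ε₀ + Real.exp α * ε₀ := add_le_add h1 h2
        _ = (k + 1 : ℕ) * Real.exp α * ε₀ := by push_cast; ring
  have := key m le_rfl
  have hsum : (∑ l : Fin m, if (l : ℕ) < m then τ l else 0) = ∑ l : Fin m, τ l := by
    apply Finset.sum_congr rfl
    intro l _
    simp [l.isLt]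
  rw [hsum] at this
  exact this
end
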